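/- Let Q be the five-lemma quiver: the quiver with 10 vertices arranged as two rows of 5 (labels 0–4 on the top row, 5–9 on the bottom row), with horizontal arcs i → i+1 for i in {0,1,2,3} and 5+i → 5+i+1 for i in {0,1,2,3}, and vertical arcs i → 5+i for i in {0,…,4}. Let π be a path relation on Q. If, for each of the four elementary squares (with corners i, i+1, 5+i, 5+i+1, for i in {0,1,2,3}), π relates the two length-two paths from the square's top-left corner i to its bottom-right corner 5+i+1 (right-then-down and down-then-right), then π is full: π relates any two paths of Q with the same source and the same target. -/

import Mathlib

/-- A finite quiver: a number `n` of vertices (the vertex set being `{0, …, n-1}`)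
together with a finite list of arcs, each arc a pair (source, target). -/
structure Quiv where
  nbVertex : ℕ
  arcs : List (ℕ × ℕ)

/-- Well-formedness: all sources and targets are below the number of vertices. -/
def Quiv.Wellformed (Q : Quiv) : Prop :=
  ∀ a ∈ Q.arcs, a.1 < Q.nbVertex ∧ a.2 < Q.nbVertex

/-- A path from `u` to `v` in `Q` is a list of indices into `Q.arcs` selecting a chain
of consecutive arcs starting at `u` and ending at `v`. -/
inductive Quiv.IsPath (Q : Quiv) : ℕ → List ℕ → ℕ → Prop
  | nil (u : ℕ) : Quiv.IsPath Q u [] u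
  | cons {u v w i : ℕ} {p : List ℕ} :
      Q.arcs[i]? = some (u, v) → Quiv.IsPath Q v p w → Quiv.IsPath Q u (i :: p) w

/-- Acyclicity: there is no nonempty path from a vertex to itself
(equivalently, every path visits pairwise distinct vertices). -/
def Quiv.Acyclic (Q : Quiv) : Prop :=
  ∀ (u : ℕ) (p : List ℕ), p ≠ [] → ¬ Q.IsPath u p u

/-- `Q` is topologically sorted in reverse order: every arc `(s, t)` satisfies `s > t`. -/
def Quiv.TopSortedRev (Q : Quiv) : Prop :=
  ∀ a ∈ Q.arcs, a.2 < a.1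

/-- A set of bipaths (pairs of paths with the same source and target), as a
quadruple relation: source, target, first path, second path. -/
abbrev BipathSet := ℕ → ℕ → List ℕ → List ℕ → Prop

/-- The smallest path relation containing `l`: the closure of `l` under reflexivity,
symmetry, transitivity, and concatenation of paths. -/
inductive PathRelClosure (l : BipathSet) : ℕ → ℕ → List ℕ → List ℕ → Prop
  | base {u v : ℕ} {p q : List ℕ} : l u v p q → PathRelClosure l u v p q
  | refl (u v : ℕ) (p : List ℕ) : PathRelClosure l u v p p
  | symm {u v : ℕ} {p q : List ℕ} :
      PathRelClosure l u v p q → PathRelClosure l u v q p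
  | trans {u v : ℕ} {p q r : List ℕ} :
      PathRelClosure l u v p q → PathRelClosure l u v q r → PathRelClosure l u v p r
  | comp {u v w : ℕ} {p p' q q' : List ℕ} :
      PathRelClosure l u v p p' → PathRelClosure l v w q q' →
      PathRelClosure l u w (p ++ q) (p' ++ q')

/-- A subquiver: a selection of vertex labels and of arc indices. -/
structure Subquiv where
  vertices : List ℕ
  arcs : List ℕ

/-- Well-formedness of a subquiver of `Q`. -/
def Subquiv.Wf (S : Subquiv) (Q : Quiv) : Prop :=
  (∀ i ∈ S.arcs, i < Q.arcs.length) ∧ S.vertices.Nodup ∧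
  (∀ x ∈ S.vertices, x < Q.nbVertex) ∧
  (∀ i ∈ S.arcs, ∀ a, Q.arcs[i]? = some a → a.1 ∈ S.vertices ∧ a.2 ∈ S.vertices)

/-- A path of the quiver induced by the subquiver `S` of `Q`, viewed as a path of `Q`:
a path of `Q` whose endpoints are selected vertices of `S` and whose arcs are all
selected arcs of `S`. -/
def Subquiv.PathIn (S : Subquiv) (Q : Quiv) (u : ℕ) (p : List ℕ) (v : ℕ) : Prop :=
  Q.IsPath u p v ∧ u ∈ S.vertices ∧ v ∈ S.vertices ∧ ∀ i ∈ p, i ∈ S.arcs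

/-- The union over the subquivers in `Qs` of the sets of bipaths of the induced
quivers, viewed as bipaths of `Q`. -/
def subBipaths (Q : Quiv) (Qs : List Subquiv) : BipathSet := fun u v p q =>
  ∃ S ∈ Qs, S.PathIn Q u p v ∧ S.PathIn Q u q v

/-- Arcs adjacent to `u` starting a path from `u` to `v` in `Q`. -/
def ArcsFrom (Q : Quiv) (u v : ℕ) : Set ℕ := {e | ∃ p, Q.IsPath u (e :: p) v}

/-- Arcs adjacent to `v` ending a path from `u` to `v` in `Q`. -/
def ArcsTo (Q : Quiv) (v u : ℕ) : Set ℕ := {e | ∃ p, Q.IsPath u (p ++ [e]) v}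

/-- `E_{u,v} = Arcs_from(u,v) ∪ Arcs_to(v,u)`. -/
def ESet (Q : Quiv) (u v : ℕ) : Set ℕ := ArcsFrom Q u v ∪ ArcsTo Q v u

/-- The edge relation of the multigraph `G_{u,v}` on `E_{u,v}`: `e1` and `e2` are
related when either some path of `Q` from `u` to `v` contains both, or some subquiver
in `Qs` contains two paths from `u` to `v` containing respectively `e1` and `e2`. -/
def GEdge (Q : Quiv) (Qs : List Subquiv) (u v : ℕ) (e1 e2 : ℕ) : Prop :=
  e1 ∈ ESet Q u v ∧ e2 ∈ ESet Q u v ∧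
  ((∃ p, Q.IsPath u p v ∧ e1 ∈ p ∧ e2 ∈ p) ∨
   (∃ S ∈ Qs, ∃ p1 p2, S.PathIn Q u p1 v ∧ S.PathIn Q u p2 v ∧ e1 ∈ p1 ∧ e2 ∈ p2))

/-- Connectedness of the multigraph `G_{u,v}`: any two vertices of `G_{u,v}`
(i.e. elements of `E_{u,v}`) are joined by a path of edges. -/
def GConnected (Q : Quiv) (Qs : List Subquiv) (u v : ℕ) : Prop :=
  ∀ e1 ∈ ESet Q u v, ∀ e2 ∈ ESet Q u v, Relation.ReflTransGen (GEdge Q Qs u v) e1 e2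

/-- Fullness of the relation `R_{u,v}` (w.r.t. the closure of the bipath set `l`):
for all `e1, e2 ∈ E_{u,v}`, every path from `u` to `v` containing `e1` is related
to every path from `u` to `v` containing `e2`. -/
def RFull (Q : Quiv) (l : BipathSet) (u v : ℕ) : Prop :=
  ∀ e1 ∈ ESet Q u v, ∀ e2 ∈ ESet Q u v,
    ∀ p1 p2, Q.IsPath u p1 v → e1 ∈ p1 → Q.IsPath u p2 v → e2 ∈ p2 →
      PathRelClosure l u v p1 p2

/-- A path relation: a family of equivalence relations on finite sequences of arc
indices, indexed by pairs of vertices, compatible with concatenation. -/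
structure PathRelation where
  rel : ℕ → ℕ → List ℕ → List ℕ → Prop
  refl : ∀ u v p, rel u v p p
  symm : ∀ {u v p q}, rel u v p q → rel u v q p
  trans : ∀ {u v p q r}, rel u v p q → rel u v q r → rel u v p r
  comp : ∀ {u v w p p' q q'}, rel u v p p' → rel v w q q' →
    rel u w (p ++ q) (p' ++ q')

/-- The five-lemma quiver: two rows of 5 vertices (top row `0`–`4`, bottom row
`5`–`9`), horizontal arcs `i → i+1` (indices `0`–`3`) and `5+i → 5+i+1` (indices
`4`–`7`), and vertical arcs `i → 5+i` (indices `8`–`12`). -/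
def fiveQuiv : Quiv :=
  ⟨10, [(0,1), (1,2), (2,3), (3,4),
        (5,6), (6,7), (7,8), (8,9),
        (0,5), (1,6), (2,7), (3,8), (4,9)]⟩



/-- Canonical path from `u` to `v` in the five-lemma quiver (down as early as possible). -/
def fiveCanon (u v : ℕ) : List ℕ :=
  if u < 5 then
    if v < 5 then List.range' u (v - u)
    else (8 + u) :: List.range' (u + 4) (v - 5 - u)
  else List.range' (u - 1) (v - u)

lemma fiveCanon_self (u : ℕ) : fiveCanon u u = [] := by
  rcases lt_or_ge u 5 with h | h <;> simp [fiveCanon, h, Nat.not_lt.2, Nat.sub_self]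

lemma five_reach : ∀ (p : List ℕ) (u v : ℕ), fiveQuiv.IsPath u p v →
    u ≤ v ∧ (v < 5 → u < 5) ∧ (u < 5 → 5 ≤ v → u + 5 ≤ v)
  | [], u, v, h => by cases h; omega
  | a :: p, u, v, h => by
    cases h with
    | cons ha hp =>
      rename_i w
      have ih := five_reach p w v hp
      have halt : a < 13 := by
        by_contra h'
        rw [List.getElem?_eq_none (by simp [fiveQuiv]; omega)] at ha
        cases ha
      interval_cases a <;> (simp [fiveQuiv] at ha) <;> omega

lemma five_step_top (π : PathRelation)
    (hsq : ∀ i < 4, π.rel i (6 + i) [i, 9 + i] [8 + i, 4 + i])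
    (i v : ℕ) (hi : i < 4) (hv : i + 1 ≤ v) (hv2 : v < 5 ∨ i + 6 ≤ v) :
    π.rel i v (i :: fiveCanon (i + 1) v) (fiveCanon i v) := by
  rcases hv2 with h5 | h5
  · have e1 : fiveCanon i v = i :: fiveCanon (i + 1) v := by
      have h1 : v - i = (v - (i + 1)) + 1 := by omega
      simp only [fiveCanon, if_pos (show i < 5 by omega), if_pos (show i + 1 < 5 by omega),
        if_pos h5, h1, List.range'_succ]
    rw [e1]; exact π.refl _ _ _
  · have e1 : fiveCanon i v = [8 + i, 4 + i] ++ List.range' (i + 5) (v - 6 - i) := by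
      have h2 : v - 5 - i = (v - 6 - i) + 1 := by omega
      have h3 : i + 4 + 1 = i + 5 := by omega
      have h3' : 4 + i + 1 = i + 5 := by omega
      have h4 : i + 4 = 4 + i := by omega
      simp only [fiveCanon, if_pos (show i < 5 by omega), if_neg (show ¬ v < 5 by omega),
        h2, List.range'_succ, h3, h3', h4, List.cons_append, List.nil_append]
    have e2 : i :: fiveCanon (i + 1) v = [i, 9 + i] ++ List.range' (i + 5) (v - 6 - i) := by
      have h2 : 8 + (i + 1) = 9 + i := by omega
      have h3 : i + 1 + 4 = i + 5 := by omega
      have h4 : v - 5 - (i + 1) = v - 6 - i := by omega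
      simp only [fiveCanon, if_pos (show i + 1 < 5 by omega), if_neg (show ¬ v < 5 by omega),
        h2, h3, h4, List.cons_append, List.nil_append]
    rw [e1, e2]
    exact π.comp (hsq i hi) (π.refl (6 + i) v _)

lemma five_step_bot (π : PathRelation)
    (u v : ℕ) (hu : 5 ≤ u) (hu2 : u ≤ 8) (hv : u + 1 ≤ v) :
    π.rel u v ((u - 1) :: fiveCanon (u + 1) v) (fiveCanon u v) := by
  have e : fiveCanon u v = (u - 1) :: fiveCanon (u + 1) v := by
    have h2 : v - u = (v - (u + 1)) + 1 := by omega
    have h3 : u - 1 + 1 = u := by omega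
    have h4 : u + 1 - 1 = u := by omega
    simp only [fiveCanon, if_neg (show ¬ u < 5 by omega), if_neg (show ¬ u + 1 < 5 by omega),
      h2, List.range'_succ, h3, h4]
  rw [e]; exact π.refl _ _ _

lemma five_step_vert (π : PathRelation)
    (u v : ℕ) (hu : u < 5) (hv : u + 5 ≤ v) :
    π.rel u v ((8 + u) :: fiveCanon (u + 5) v) (fiveCanon u v) := by
  have e : fiveCanon u v = (8 + u) :: fiveCanon (u + 5) v := by
    have h3 : u + 5 - 1 = u + 4 := by omega
    have h4 : v - (u + 5) = v - 5 - u := by omega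
    simp only [fiveCanon, if_pos hu, if_neg (show ¬ u + 5 < 5 by omega),
      if_neg (show ¬ v < 5 by omega), h3, h4]
  rw [e]; exact π.refl _ _ _

lemma five_canon (π : PathRelation)
    (hsq : ∀ i < 4, π.rel i (6 + i) [i, 9 + i] [8 + i, 4 + i]) :
    ∀ (p : List ℕ) (u v : ℕ), fiveQuiv.IsPath u p v → π.rel u v p (fiveCanon u v)
  | [], u, v, h => by
    cases h
    rw [fiveCanon_self]
    exact π.refl u u []
  | a :: p, u, v, h => by
    cases h with
    | cons ha hp =>
      rename_i w
      have ih := five_canon π hsq p w v hp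
      have hr := five_reach p w v hp
      have step1 : π.rel u v (a :: p) (a :: fiveCanon w v) := by
        have := π.comp (π.refl u w [a]) ih
        simpa using this
      refine π.trans step1 ?_
      have halt : a < 13 := by
        by_contra h'
        rw [List.getElem?_eq_none (by simp [fiveQuiv]; omega)] at ha
        cases ha
      interval_cases a <;> (simp [fiveQuiv] at ha; obtain ⟨rfl, rfl⟩ := ha)
      · exact five_step_top π hsq 0 v (by omega) (by omega) (by omega)
      · exact five_step_top π hsq 1 v (by omega) (by omega) (by omega)
      · exact five_step_top π hsq 2 v (by omega) (by omega) (by omega)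
      · exact five_step_top π hsq 3 v (by omega) (by omega) (by omega)
      · exact five_step_bot π 5 v (by omega) (by omega) (by omega)
      · exact five_step_bot π 6 v (by omega) (by omega) (by omega)
      · exact five_step_bot π 7 v (by omega) (by omega) (by omega)
      · exact five_step_bot π 8 v (by omega) (by omega) (by omega)
      · exact five_step_vert π 0 v (by omega) (by omega)
      · exact five_step_vert π 1 v (by omega) (by omega)
      · exact five_step_vert π 2 v (by omega) (by omega)
      · exact five_step_vert π 3 v (by omega) (by omega)
      · exact five_step_vert π 4 v (by omega) (by omega)

/-- If, for each of the four elementary squares of the five-lemma quiver, `π` relates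
the two length-two paths from the square's top-left corner `i` to its bottom-right
corner `5+i+1` (right-then-down, i.e. arcs `[i, 9+i]`, and down-then-right, i.e.
arcs `[8+i, 4+i]`), then `π` relates any two paths of the five-lemma quiver with the
same source and the same target. -/
theorem fiveQuiv_commutes (π : PathRelation)
    (hsq : ∀ i < 4, π.rel i (6 + i) [i, 9 + i] [8 + i, 4 + i]) :
    ∀ u v p q, fiveQuiv.IsPath u p v → fiveQuiv.IsPath u q v → π.rel u v p q := by
  intro u v p q hp hq
  exact π.trans (five_canon π hsq p u v hp) (π.symm (five_canon π hsq q u v hq))
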